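/- Let ρ be an ordinal, a ∈ X, m : ℕ → ℕ strictly increasing, and y : ℕ → X a sequence with d (y n) a = ω^ρ · (m n) for all n ∈ ℕ. Then there exists a sequence w : ℕ → X such that (i) w is not ρ-limitedly distant from the constant sequence at a, and (ii) for every μ ∈ ℕ, {n : d (w n) a ♯ ω^ρ · μ ≤ d (y n) a} ∈ F. (This is the 'closer galaxy' construction in the proof of Theorem 5.1: the ρ-galaxy of [w] is different from the principal ρ-galaxy and closer to it than the ρ-galaxy of [y].) -/

import Mathlib

open Filter Ordinal
open scoped Ordinal

universe u

/-- Natural (Hessenberg) sum of ordinals, as `Ordinal.nadd` was defined in Mathlib (Dec 2024). -/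
noncomputable def Ordinal.nadd : Ordinal.{u} → Ordinal.{u} → Ordinal.{u}
  | a, b =>
    max (blsub.{u, u} a fun a' _ => Ordinal.nadd a' b) (blsub.{u, u} b fun b' _ => Ordinal.nadd a b')
termination_by o₁ o₂ => (o₁, o₂)

infixl:65 " ♯ " => Ordinal.nadd

/-- Sequences `x, y : ℕ → X` are `ρ`-limitedly distant if there exists `μ ∈ ℕ` with
`{n : d (x n) (y n) ≤ ω^ρ · μ} ∈ F`. -/
def LimitedlyDistant {X : Type*} (d : X → X → Ordinal) (F : Ultrafilter ℕ)
    (ρ : Ordinal) (x y : ℕ → X) : Prop :=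
  ∃ μ : ℕ, {n : ℕ | d (x n) (y n) ≤ ω ^ ρ * μ} ∈ F

namespace Ordinal

theorem nadd_def (a b : Ordinal.{u}) :
    a ♯ b = max (blsub.{u, u} a fun a' _ => a' ♯ b) (blsub.{u, u} b fun b' _ => a ♯ b') := by
  rw [Ordinal.nadd]

theorem lt_nadd_iff {a b c : Ordinal.{u}} :
    a < b ♯ c ↔ (∃ b' < b, a ≤ b' ♯ c) ∨ ∃ c' < c, a ≤ b ♯ c' := by
  rw [nadd_def]
  simp [lt_blsub_iff]

theorem nadd_le_iff {a b c : Ordinal.{u}} :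
    b ♯ c ≤ a ↔ (∀ b' < b, b' ♯ c < a) ∧ ∀ c' < c, b ♯ c' < a := by
  rw [nadd_def]
  simp [blsub_le_iff]

theorem nadd_lt_nadd_left {b c : Ordinal.{u}} (h : b < c) (a : Ordinal.{u}) : a ♯ b < a ♯ c :=
  lt_nadd_iff.2 (Or.inr ⟨b, h, le_rfl⟩)

theorem nadd_lt_nadd_right {b c : Ordinal.{u}} (h : b < c) (a : Ordinal.{u}) : b ♯ a < c ♯ a :=
  lt_nadd_iff.2 (Or.inl ⟨b, h, le_rfl⟩)

theorem nadd_le_nadd_left {b c : Ordinal.{u}} (h : b ≤ c) (a : Ordinal.{u}) : a ♯ b ≤ a ♯ c := by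
  rcases lt_or_eq_of_le h with (h | rfl)
  · exact (nadd_lt_nadd_left h a).le
  · exact le_rfl

theorem nadd_le_nadd_right {b c : Ordinal.{u}} (h : b ≤ c) (a : Ordinal.{u}) : b ♯ a ≤ c ♯ a := by
  rcases lt_or_eq_of_le h with (h | rfl)
  · exact (nadd_lt_nadd_right h a).le
  · exact le_rfl

theorem nadd_le_nadd {a b c d : Ordinal.{u}} (h1 : a ≤ b) (h2 : c ≤ d) : a ♯ c ≤ b ♯ d :=
  (nadd_le_nadd_left h2 a).trans (nadd_le_nadd_right h1 d)

theorem nadd_comm : ∀ a b : Ordinal.{u}, a ♯ b = b ♯ a := by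
  intro a
  induction a using Ordinal.induction with
  | h a IHa =>
    intro b
    induction b using Ordinal.induction with
    | h b IHb =>
      have h1 : (fun a' (_ : a' < a) => a' ♯ b) = fun a' _ => b ♯ a' := by
        funext a' ha'; exact IHa a' ha' b
      have h2 : (fun b' (_ : b' < b) => a ♯ b') = fun b' _ => b' ♯ a := by
        funext b' hb'; exact IHb b' hb'
      rw [nadd_def a b, nadd_def b a, h1, h2]
      exact max_comm _ _

theorem nadd_assoc : ∀ a b c : Ordinal.{u}, a ♯ b ♯ c = a ♯ (b ♯ c) := by
  intro a
  induction a using Ordinal.induction with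
  | h a IHa =>
  intro b
  induction b using Ordinal.induction with
  | h b IHb =>
  intro c
  induction c using Ordinal.induction with
  | h c IHc =>
  apply le_antisymm
  · rw [nadd_le_iff]
    constructor
    · intro d hd
      rcases lt_nadd_iff.1 hd with ⟨a', ha', hd'⟩ | ⟨b', hb', hd'⟩
      · calc d ♯ c ≤ a' ♯ b ♯ c := nadd_le_nadd_right hd' c
          _ = a' ♯ (b ♯ c) := IHa a' ha' b c
          _ < a ♯ (b ♯ c) := nadd_lt_nadd_right ha' _
      · calc d ♯ c ≤ a ♯ b' ♯ c := nadd_le_nadd_right hd' c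
          _ = a ♯ (b' ♯ c) := IHb b' hb' c
          _ < a ♯ (b ♯ c) := nadd_lt_nadd_left (nadd_lt_nadd_right hb' c) a
    · intro c' hc'
      calc a ♯ b ♯ c' = a ♯ (b ♯ c') := IHc c' hc'
        _ < a ♯ (b ♯ c) := nadd_lt_nadd_left (nadd_lt_nadd_left hc' b) a
  · rw [nadd_le_iff]
    constructor
    · intro a' ha'
      calc a' ♯ (b ♯ c) = a' ♯ b ♯ c := (IHa a' ha' b c).symm
        _ < a ♯ b ♯ c := nadd_lt_nadd_right (nadd_lt_nadd_right ha' b) c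
    · intro d hd
      rcases lt_nadd_iff.1 hd with ⟨b', hb', hd'⟩ | ⟨c', hc', hd'⟩
      · calc a ♯ d ≤ a ♯ (b' ♯ c) := nadd_le_nadd_left hd' a
          _ = a ♯ b' ♯ c := (IHb b' hb' c).symm
          _ < a ♯ b ♯ c := nadd_lt_nadd_right (nadd_lt_nadd_left hb' a) c
      · calc a ♯ d ≤ a ♯ (b ♯ c') := nadd_le_nadd_left hd' a
          _ = a ♯ b ♯ c' := (IHc c' hc').symm
          _ < a ♯ b ♯ c := nadd_lt_nadd_left hc' _

theorem nadd_left_comm (a b c : Ordinal.{u}) : a ♯ (b ♯ c) = b ♯ (a ♯ c) := by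
  rw [← nadd_assoc, nadd_comm a b, nadd_assoc]

@[simp] theorem nadd_zero (a : Ordinal.{u}) : a ♯ 0 = a := by
  induction a using Ordinal.induction with
  | h a IH =>
  apply le_antisymm
  · rw [nadd_le_iff]
    refine ⟨fun a' ha' => ?_, fun c' hc' => by simp at hc'⟩
    rw [IH a' ha']; exact ha'
  · refine le_of_forall_lt fun a' ha' => ?_
    calc a' = a' ♯ 0 := (IH a' ha').symm
      _ < a ♯ 0 := nadd_lt_nadd_right ha' 0

@[simp] theorem zero_nadd (a : Ordinal.{u}) : 0 ♯ a = a := by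
  rw [nadd_comm, nadd_zero]

theorem add_le_nadd (a b : Ordinal.{u}) : a + b ≤ a ♯ b := by
  induction b using Ordinal.induction with
  | h b IH =>
  refine le_of_forall_lt fun x hx => ?_
  rcases lt_or_ge x a with hxa | hax
  · calc x < a := hxa
      _ = a ♯ 0 := (nadd_zero a).symm
      _ ≤ a ♯ b := nadd_le_nadd_left (zero_le (a := b)) a
  · have hx' : a + (x - a) = x := Ordinal.add_sub_cancel_of_le hax
    have hlt : x - a < b := by
      rw [← hx'] at hx
      exact lt_of_add_lt_add_left hx
    calc x = a + (x - a) := hx'.symm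
      _ ≤ a ♯ (x - a) := IH _ hlt
      _ < a ♯ b := nadd_lt_nadd_left hlt a

end Ordinal

namespace ClosingAux

/-- commutativity/associativity juggling for `♯`. -/
theorem nadd_nadd_nadd_comm (a b c d : Ordinal) :
    (a ♯ b) ♯ (c ♯ d) = (a ♯ c) ♯ (b ♯ d) := by
  rw [Ordinal.nadd_assoc, Ordinal.nadd_left_comm b, ← Ordinal.nadd_assoc]

/-- `r ♯ ω^ρ * k = ω^ρ * k + r` for `r < ω^ρ`, assuming closure of `ω^ρ` under `♯`. -/
theorem nadd_opow_mul_nat (ρ : Ordinal)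
    (hC : ∀ r s : Ordinal, r < ω ^ ρ → s < ω ^ ρ → r ♯ s < ω ^ ρ) :
    ∀ (k : ℕ) (r : Ordinal), r < ω ^ ρ → r ♯ ω ^ ρ * k = ω ^ ρ * k + r := by
  have hpos : (0 : Ordinal) < ω ^ ρ := opow_pos ρ omega0_pos
  intro k
  induction k using Nat.strong_induction_on with
  | _ k IHk =>
    intro r
    induction r using Ordinal.induction with
    | h r IHr =>
      intro hr
      refine le_antisymm ?_ ?_
      · rw [Ordinal.nadd_le_iff]
        constructor
        · intro r' hr'
          rw [IHr r' hr' (hr'.trans hr)]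
          exact add_lt_add_right hr' _
        · intro c hc
          -- decompose c = ω^ρ * j + s with j < k, s < ω^ρ
          have hs : c % ω ^ ρ < ω ^ ρ := Ordinal.mod_lt c hpos.ne'
          have hdm : ω ^ ρ * (c / ω ^ ρ) + c % ω ^ ρ = c := Ordinal.div_add_mod c _
          have hjlt : c / ω ^ ρ < (k : Ordinal) := (Ordinal.div_lt hpos.ne').2 hc
          obtain ⟨j, hj⟩ := Ordinal.lt_omega0.1 (hjlt.trans_le (Ordinal.nat_lt_omega0 k).le)
          have hjk : j < k := by exact_mod_cast hj ▸ hjlt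
          calc r ♯ c = r ♯ (ω ^ ρ * j + c % ω ^ ρ) := by rw [← hj, hdm]
            _ ≤ r ♯ (ω ^ ρ * j ♯ c % ω ^ ρ) :=
                Ordinal.nadd_le_nadd_left (Ordinal.add_le_nadd _ _) _
            _ = (r ♯ c % ω ^ ρ) ♯ ω ^ ρ * j := by
                rw [Ordinal.nadd_comm (ω ^ ρ * j), ← Ordinal.nadd_assoc]
            _ = ω ^ ρ * j + (r ♯ c % ω ^ ρ) := IHk j hjk _ (hC _ _ hr hs)
            _ < ω ^ ρ * j + ω ^ ρ := add_lt_add_right (hC _ _ hr hs) _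
            _ = ω ^ ρ * (j + 1 : ℕ) := by push_cast; rw [mul_add, mul_one]
            _ ≤ ω ^ ρ * k := mul_le_mul_right (by exact_mod_cast hjk) _
            _ ≤ ω ^ ρ * k + r := le_self_add
      · calc ω ^ ρ * k + r ≤ ω ^ ρ * k ♯ r := Ordinal.add_le_nadd _ _
          _ = r ♯ ω ^ ρ * k := Ordinal.nadd_comm _ _

/-- `ω^ρ * k ♯ ω^ρ * μ = ω^ρ * (k + μ)`, assuming closure of `ω^ρ` under `♯`. -/
theorem opow_mul_nat_nadd (ρ : Ordinal)
    (hC : ∀ r s : Ordinal, r < ω ^ ρ → s < ω ^ ρ → r ♯ s < ω ^ ρ) :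
    ∀ (k μ : ℕ), ω ^ ρ * k ♯ ω ^ ρ * μ = ω ^ ρ * ((k + μ : ℕ) : Ordinal) := by
  have hpos : (0 : Ordinal) < ω ^ ρ := opow_pos ρ omega0_pos
  have main : ∀ (N k μ : ℕ), k + μ ≤ N →
      ω ^ ρ * k ♯ ω ^ ρ * μ = ω ^ ρ * ((k + μ : ℕ) : Ordinal) := by
    intro N
    induction N using Nat.strong_induction_on with
    | _ N IH =>
      intro k μ hN
      have key : ∀ (k' μ' : ℕ), k' + μ' = k + μ →
          ∀ c < ω ^ ρ * k', c ♯ ω ^ ρ * μ' < ω ^ ρ * ((k + μ : ℕ) : Ordinal) := by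
        intro k' μ' hsum c hc
        have hs : c % ω ^ ρ < ω ^ ρ := Ordinal.mod_lt c hpos.ne'
        have hdm : ω ^ ρ * (c / ω ^ ρ) + c % ω ^ ρ = c := Ordinal.div_add_mod c _
        have hjlt : c / ω ^ ρ < (k' : Ordinal) := (Ordinal.div_lt hpos.ne').2 hc
        obtain ⟨j, hj⟩ := Ordinal.lt_omega0.1 (hjlt.trans_le (Ordinal.nat_lt_omega0 k').le)
        have hjk : j < k' := by exact_mod_cast hj ▸ hjlt
        have hlt : j + μ' < N := by omega
        calc c ♯ ω ^ ρ * μ' = (ω ^ ρ * j + c % ω ^ ρ) ♯ ω ^ ρ * μ' := by rw [← hj, hdm]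
          _ ≤ (ω ^ ρ * j ♯ c % ω ^ ρ) ♯ ω ^ ρ * μ' :=
              Ordinal.nadd_le_nadd_right (Ordinal.add_le_nadd _ _) _
          _ = c % ω ^ ρ ♯ (ω ^ ρ * j ♯ ω ^ ρ * μ') := by
              rw [Ordinal.nadd_comm (ω ^ ρ * j), Ordinal.nadd_assoc]
          _ = c % ω ^ ρ ♯ ω ^ ρ * ((j + μ' : ℕ) : Ordinal) := by
              rw [IH (j + μ') hlt j μ' le_rfl]
          _ = ω ^ ρ * ((j + μ' : ℕ) : Ordinal) + c % ω ^ ρ :=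
              nadd_opow_mul_nat ρ hC _ _ hs
          _ < ω ^ ρ * ((j + μ' : ℕ) : Ordinal) + ω ^ ρ := add_lt_add_right hs _
          _ = ω ^ ρ * ((j + μ' + 1 : ℕ) : Ordinal) := by push_cast [mul_add, mul_one]; rfl
          _ ≤ ω ^ ρ * ((k + μ : ℕ) : Ordinal) := mul_le_mul_right (by exact_mod_cast (by omega : j + μ' + 1 ≤ k + μ)) _
      refine le_antisymm ?_ ?_
      · rw [Ordinal.nadd_le_iff]
        constructor
        · intro c hc
          exact key k μ rfl c hc
        · intro c hc
          rw [Ordinal.nadd_comm]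
          exact key μ k (by omega) c hc
      · rw [Nat.cast_add, mul_add]
        exact Ordinal.add_le_nadd _ _
  exact fun k μ => main (k + μ) k μ le_rfl

/-- `ω^ρ` is closed under natural addition. -/
theorem nadd_lt_opow : ∀ (ρ : Ordinal) (r s : Ordinal),
    r < ω ^ ρ → s < ω ^ ρ → r ♯ s < ω ^ ρ := by
  intro ρ
  induction ρ using Ordinal.induction with
  | h ρ IH =>
    intro r s hr hs
    rcases eq_or_ne r 0 with rfl | hr0
    · simpa using hs
    rcases eq_or_ne s 0 with rfl | hs0
    · simpa using hr
    have hlogr : Ordinal.log ω r < ρ := (Ordinal.lt_opow_iff_log_lt one_lt_omega0 hr0).1 hr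
    have hlogs : Ordinal.log ω s < ρ := (Ordinal.lt_opow_iff_log_lt one_lt_omega0 hs0).1 hs
    set e := max (Ordinal.log ω r) (Ordinal.log ω s) with he_def
    have he : e < ρ := max_lt hlogr hlogs
    have hpos : (0 : Ordinal) < ω ^ e := opow_pos e omega0_pos
    have hre : r < ω ^ e * ω := by
      calc r < ω ^ Order.succ (Ordinal.log ω r) := Ordinal.lt_opow_succ_log_self one_lt_omega0 r
        _ ≤ ω ^ Order.succ e := opow_le_opow_right omega0_pos (Order.succ_le_succ (le_max_left _ _))
        _ = ω ^ e * ω := opow_succ ω e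
    have hse : s < ω ^ e * ω := by
      calc s < ω ^ Order.succ (Ordinal.log ω s) := Ordinal.lt_opow_succ_log_self one_lt_omega0 s
        _ ≤ ω ^ Order.succ e := opow_le_opow_right omega0_pos (Order.succ_le_succ (le_max_right _ _))
        _ = ω ^ e * ω := opow_succ ω e
    -- decompose r and s
    have hr1 : r % ω ^ e < ω ^ e := Ordinal.mod_lt r hpos.ne'
    have hs1 : s % ω ^ e < ω ^ e := Ordinal.mod_lt s hpos.ne'
    have hdr : ω ^ e * (r / ω ^ e) + r % ω ^ e = r := Ordinal.div_add_mod r _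
    have hds : ω ^ e * (s / ω ^ e) + s % ω ^ e = s := Ordinal.div_add_mod s _
    obtain ⟨nr, hnr⟩ := Ordinal.lt_omega0.1 ((Ordinal.div_lt hpos.ne').2 hre)
    obtain ⟨ns, hns⟩ := Ordinal.lt_omega0.1 ((Ordinal.div_lt hpos.ne').2 hse)
    have hCe : ∀ r' s' : Ordinal, r' < ω ^ e → s' < ω ^ e → r' ♯ s' < ω ^ e := IH e he
    have hρ : ω ^ e * ω ≤ ω ^ ρ := by
      rw [← opow_succ]
      exact opow_le_opow_right omega0_pos (Order.succ_le_of_lt he)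
    have hmain : r ♯ s < ω ^ e * ω := by
      calc r ♯ s = (ω ^ e * nr + r % ω ^ e) ♯ (ω ^ e * ns + s % ω ^ e) := by
            rw [← hnr, ← hns, hdr, hds]
        _ ≤ (ω ^ e * nr ♯ r % ω ^ e) ♯ (ω ^ e * ns ♯ s % ω ^ e) :=
            Ordinal.nadd_le_nadd (Ordinal.add_le_nadd _ _) (Ordinal.add_le_nadd _ _)
        _ = (ω ^ e * nr ♯ ω ^ e * ns) ♯ (r % ω ^ e ♯ s % ω ^ e) := nadd_nadd_nadd_comm _ _ _ _
        _ = (r % ω ^ e ♯ s % ω ^ e) ♯ ω ^ e * ((nr + ns : ℕ) : Ordinal) := by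
            rw [opow_mul_nat_nadd e hCe, Ordinal.nadd_comm]
        _ = ω ^ e * ((nr + ns : ℕ) : Ordinal) + (r % ω ^ e ♯ s % ω ^ e) :=
            nadd_opow_mul_nat e hCe _ _ (hCe _ _ hr1 hs1)
        _ < ω ^ e * ((nr + ns : ℕ) : Ordinal) + ω ^ e := add_lt_add_right (hCe _ _ hr1 hs1) _
        _ = ω ^ e * ((nr + ns + 1 : ℕ) : Ordinal) := by push_cast [mul_add, mul_one]; rfl
        _ < ω ^ e * ω := by
            exact (mul_lt_mul_iff_right₀ hpos).2 (Ordinal.nat_lt_omega0 _)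
    exact hmain.trans_le hρ

/-- The key computation: `ω^ρ * k ♯ ω^ρ * μ = ω^ρ * (k + μ)`. -/
theorem key (ρ : Ordinal) (k μ : ℕ) :
    ω ^ ρ * k ♯ ω ^ ρ * μ = ω ^ ρ * ((k + μ : ℕ) : Ordinal) :=
  opow_mul_nat_nadd ρ (nadd_lt_opow ρ) k μ

theorem strictMono_add_le {m : ℕ → ℕ} (hm : StrictMono m) (a k : ℕ) :
    m a + k ≤ m (a + k) := by
  induction k with
  | zero => simp
  | succ k ih =>
      have h : m (a + k) < m (a + k + 1) := hm (by omega)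
      have h2 : a + (k + 1) = a + k + 1 := by omega
      rw [h2]; omega

end ClosingAux

theorem exists_closer_galaxy
    (X : Type*) (d : X → X → Ordinal)
    (hd0 : ∀ a b : X, d a b = 0 ↔ a = b)
    (hdsymm : ∀ a b : X, d a b = d b a)
    (hdtri : ∀ a b c : X, d a c ≤ d a b ♯ d b c)
    (F : Ultrafilter ℕ) (hF : ∀ s : Set ℕ, sᶜ.Finite → s ∈ F)
    (ρ : Ordinal) (a : X) (m : ℕ → ℕ) (hm : StrictMono m)
    (y : ℕ → X) (hy : ∀ n : ℕ, d (y n) a = ω ^ ρ * (m n)) :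
    ∃ w : ℕ → X,
      ¬ LimitedlyDistant d F ρ w (fun _ => a) ∧
      ∀ μ : ℕ, {n : ℕ | d (w n) a ♯ ω ^ ρ * μ ≤ d (y n) a} ∈ F := by
  have hpos : (0 : Ordinal) < ω ^ ρ := opow_pos ρ omega0_pos
  have hcof : ∀ c : ℕ, {n : ℕ | c ≤ n} ∈ F := by
    intro c
    apply hF
    have : {n : ℕ | c ≤ n}ᶜ = Set.Iio c := by ext n; simp only [Set.mem_compl_iff, Set.mem_setOf_eq, Set.mem_Iio]; omega
    rw [this]; exact Set.finite_Iio c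
  refine ⟨fun n => y (n / 2), ?_, ?_⟩
  · rintro ⟨μ, hμ⟩
    have hTset : {n : ℕ | 2 * (μ + 1) ≤ n} ∈ F := hcof _
    obtain ⟨n, hn1, hn2⟩ := Filter.nonempty_of_mem (Filter.inter_mem hμ hTset)
    simp only [Set.mem_setOf_eq] at hn1 hn2
    rw [hy] at hn1
    have hμlt : μ < m (n / 2) := by
      have hle : n / 2 ≤ m (n / 2) := hm.le_apply
      omega
    have : ω ^ ρ * (μ : Ordinal) < ω ^ ρ * (m (n / 2) : Ordinal) :=
      (mul_lt_mul_iff_right₀ hpos).2 (by exact_mod_cast hμlt)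
    exact absurd hn1 (not_le.2 this)
  · intro μ
    refine Filter.mem_of_superset (hcof (2 * μ)) ?_
    intro n hn
    simp only [Set.mem_setOf_eq] at hn ⊢
    rw [hy, hy, ClosingAux.key]
    apply mul_le_mul_right
    have h1 : m (n / 2) + μ ≤ m (n / 2 + μ) := ClosingAux.strictMono_add_le hm _ _
    have h2 : m (n / 2 + μ) ≤ m n := hm.monotone (by omega)
    exact_mod_cast le_trans h1 h2
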